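/- Let K be a compact linearly ordered space, X ⊆ K a closed subset. Then there exists a regular extension operator T : C(X) → C(K), i.e. a bounded linear operator with T1 = 1, Tf ≥ 0 whenever f ≥ 0, and (Tf)|_X = f for all f ∈ C(X); moreover ‖T‖ = 1. -/

import Mathlib

open Set Filter Topology
open scoped Classical

namespace RegExtAux

lemma convex_abs_le {s u v t ε : ℝ} (hs0 : 0 ≤ s) (hs1 : s ≤ 1)
    (hu : |u - t| ≤ ε) (hv : |v - t| ≤ ε) : |(1 - s) * u + s * v - t| ≤ ε := by
  have h : (1 - s) * u + s * v - t = (1 - s) * (u - t) + s * (v - t) := by ring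
  rw [h]
  calc |(1 - s) * (u - t) + s * (v - t)| ≤ |(1 - s) * (u - t)| + |s * (v - t)| := abs_add_le _ _
    _ = (1 - s) * |u - t| + s * |v - t| := by
        rw [abs_mul, abs_mul, abs_of_nonneg (by linarith), abs_of_nonneg hs0]
    _ ≤ (1 - s) * ε + s * ε := by
        have h1 : (1 - s) * |u - t| ≤ (1 - s) * ε := mul_le_mul_of_nonneg_left hu (by linarith)
        have h2 : s * |v - t| ≤ s * ε := mul_le_mul_of_nonneg_left hv hs0
        linarith
    _ = ε := by ring

variable {K : Type*} [TopologicalSpace K] [LinearOrder K] [OrderTopology K] [CompactSpace K]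

noncomputable def ury (p q : K) : C(K, ℝ) :=
  if h : p < q then
    (exists_continuous_zero_one_of_isClosed (isClosed_singleton (x := p))
      (isClosed_singleton (x := q)) (disjoint_singleton.mpr h.ne)).choose
  else 0

lemma ury_mem (p q k : K) : ury p q k ∈ Icc (0:ℝ) 1 := by
  rw [ury]; split_ifs with h
  · exact (exists_continuous_zero_one_of_isClosed (isClosed_singleton (x := p))
      (isClosed_singleton (x := q)) (disjoint_singleton.mpr h.ne)).choose_spec.2.2 k
  · exact ⟨le_rfl, zero_le_one⟩

lemma ury_spec (p q : K) (h : p < q) : ury p q p = 0 ∧ ury p q q = 1 := by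
  rw [ury, dif_pos h]
  obtain ⟨h0, h1, _⟩ := (exists_continuous_zero_one_of_isClosed (isClosed_singleton (x := p))
    (isClosed_singleton (x := q)) (disjoint_singleton.mpr h.ne)).choose_spec
  exact ⟨by simpa using h0 (mem_singleton p), by simpa using h1 (mem_singleton q)⟩

lemma B_ne (X : Set K) (hne : X.Nonempty) {k : K} (h : ¬(X ∩ Iic k).Nonempty) :
    (X ∩ Ici k).Nonempty := by
  obtain ⟨x, hx⟩ := hne
  rcases le_total x k with h' | h'
  · exact absurd ⟨x, hx, h'⟩ h
  · exact ⟨x, hx, h'⟩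

noncomputable def aa (X : Set K) (hXcl : IsClosed X) (hne : X.Nonempty) (k : K) : K :=
  if h : (X ∩ Iic k).Nonempty then
    ((hXcl.isCompact.inter_right isClosed_Iic).exists_isGreatest h).choose
  else hne.choose

noncomputable def bb (X : Set K) (hXcl : IsClosed X) (hne : X.Nonempty) (k : K) : K :=
  if h : (X ∩ Ici k).Nonempty then
    ((hXcl.isCompact.inter_right isClosed_Ici).exists_isLeast h).choose
  else hne.choose

lemma aa_spec (X : Set K) (hXcl : IsClosed X) (hne : X.Nonempty) {k : K}
    (h : (X ∩ Iic k).Nonempty) : IsGreatest (X ∩ Iic k) (aa X hXcl hne k) := by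
  rw [aa, dif_pos h]
  exact ((hXcl.isCompact.inter_right isClosed_Iic).exists_isGreatest h).choose_spec

lemma bb_spec (X : Set K) (hXcl : IsClosed X) (hne : X.Nonempty) {k : K}
    (h : (X ∩ Ici k).Nonempty) : IsLeast (X ∩ Ici k) (bb X hXcl hne k) := by
  rw [bb, dif_pos h]
  exact ((hXcl.isCompact.inter_right isClosed_Ici).exists_isLeast h).choose_spec

noncomputable def gfun (X : Set K) (hXcl : IsClosed X) (hne : X.Nonempty)
    (f : C(X, ℝ)) (k : K) : ℝ :=
  if hA : (X ∩ Iic k).Nonempty then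
    if hB : (X ∩ Ici k).Nonempty then
      (1 - ury (aa X hXcl hne k) (bb X hXcl hne k) k) * f ⟨aa X hXcl hne k, (aa_spec X hXcl hne hA).1.1⟩
        + ury (aa X hXcl hne k) (bb X hXcl hne k) k * f ⟨bb X hXcl hne k, (bb_spec X hXcl hne hB).1.1⟩
    else f ⟨aa X hXcl hne k, (aa_spec X hXcl hne hA).1.1⟩
  else f ⟨bb X hXcl hne k, (bb_spec X hXcl hne (B_ne X hne hA)).1.1⟩

lemma fval_congr {X : Set K} (f : C(X, ℝ)) {y z : K} (hy : y ∈ X) (hz : z ∈ X) (h : y = z) :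
    f ⟨y, hy⟩ = f ⟨z, hz⟩ := by subst h; rfl

lemma gfun_eq_formula (X : Set K) (hXcl : IsClosed X) (hne : X.Nonempty) (f : C(X, ℝ)) {k : K}
    (hA : (X ∩ Iic k).Nonempty) (hB : (X ∩ Ici k).Nonempty) :
    gfun X hXcl hne f k =
      (1 - ury (aa X hXcl hne k) (bb X hXcl hne k) k) * f ⟨aa X hXcl hne k, (aa_spec X hXcl hne hA).1.1⟩
        + ury (aa X hXcl hne k) (bb X hXcl hne k) k * f ⟨bb X hXcl hne k, (bb_spec X hXcl hne hB).1.1⟩ := by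
  rw [gfun, dif_pos hA, dif_pos hB]

lemma gfun_mem_X (X : Set K) (hXcl : IsClosed X) (hne : X.Nonempty) (f : C(X, ℝ)) {k : K}
    (hk : k ∈ X) : gfun X hXcl hne f k = f ⟨k, hk⟩ := by
  have hA : (X ∩ Iic k).Nonempty := ⟨k, hk, le_rfl⟩
  have hB : (X ∩ Ici k).Nonempty := ⟨k, hk, le_rfl⟩
  have hak : aa X hXcl hne k = k :=
    (aa_spec X hXcl hne hA).unique ⟨⟨hk, le_rfl⟩, fun x hx => hx.2⟩
  have hbk : bb X hXcl hne k = k :=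
    (bb_spec X hXcl hne hB).unique ⟨⟨hk, le_rfl⟩, fun x hx => hx.2⟩
  rw [gfun_eq_formula X hXcl hne f hA hB,
    fval_congr f (aa_spec X hXcl hne hA).1.1 hk hak,
    fval_congr f (bb_spec X hXcl hne hB).1.1 hk hbk]
  ring

lemma gfun_eq_two (X : Set K) (hXcl : IsClosed X) (hne : X.Nonempty) (f : C(X, ℝ))
    {p q k : K} (hp : p ∈ X) (hq : q ∈ X) (hpq : p < q)
    (hgap : ∀ x ∈ X, x ≤ p ∨ q ≤ x) (hpk : p ≤ k) (hkq : k ≤ q) :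
    gfun X hXcl hne f k = (1 - ury p q k) * f ⟨p, hp⟩ + ury p q k * f ⟨q, hq⟩ := by
  rcases eq_or_lt_of_le hpk with heq | hpk'
  · rw [← heq, gfun_mem_X X hXcl hne f hp, (ury_spec p q hpq).1]; ring
  rcases eq_or_lt_of_le hkq with heq | hkq'
  · rw [heq, gfun_mem_X X hXcl hne f hq, (ury_spec p q hpq).2]; ring
  have hA : (X ∩ Iic k).Nonempty := ⟨p, hp, hpk⟩
  have hB : (X ∩ Ici k).Nonempty := ⟨q, hq, hkq⟩
  have hap : aa X hXcl hne k = p :=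
    (aa_spec X hXcl hne hA).unique ⟨⟨hp, hpk⟩, fun x hx =>
      (hgap x hx.1).resolve_right fun h => absurd (h.trans hx.2) (not_le.mpr hkq')⟩
  have hbq : bb X hXcl hne k = q :=
    (bb_spec X hXcl hne hB).unique ⟨⟨hq, hkq⟩, fun x hx =>
      (hgap x hx.1).resolve_left fun h => absurd (hx.2.trans h) (not_le.mpr hpk')⟩
  rw [gfun_eq_formula X hXcl hne f hA hB,
    fval_congr f (aa_spec X hXcl hne hA).1.1 hp hap,
    fval_congr f (bb_spec X hXcl hne hB).1.1 hq hbq, hap, hbq]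

lemma gfun_add (X : Set K) (hXcl : IsClosed X) (hne : X.Nonempty) (f g : C(X, ℝ)) (k : K) :
    gfun X hXcl hne (f + g) k = gfun X hXcl hne f k + gfun X hXcl hne g k := by
  simp only [gfun]
  split_ifs with h1 h2 <;> simp only [ContinuousMap.add_apply] <;> ring

lemma gfun_smul (X : Set K) (hXcl : IsClosed X) (hne : X.Nonempty) (c : ℝ) (f : C(X, ℝ)) (k : K) :
    gfun X hXcl hne (c • f) k = c * gfun X hXcl hne f k := by
  simp only [gfun]
  split_ifs with h1 h2 <;> simp only [ContinuousMap.smul_apply, smul_eq_mul] <;> ring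

lemma gfun_one (X : Set K) (hXcl : IsClosed X) (hne : X.Nonempty) (k : K) :
    gfun X hXcl hne 1 k = 1 := by
  simp only [gfun]
  split_ifs with h1 h2 <;> simp only [ContinuousMap.one_apply] <;> ring

lemma gfun_nonneg (X : Set K) (hXcl : IsClosed X) (hne : X.Nonempty) {f : C(X, ℝ)}
    (hf : ∀ y, 0 ≤ f y) (k : K) : 0 ≤ gfun X hXcl hne f k := by
  simp only [gfun]
  split_ifs with h1 h2
  · have hs := ury_mem (aa X hXcl hne k) (bb X hXcl hne k) k
    exact add_nonneg (mul_nonneg (by linarith [hs.2]) (hf _)) (mul_nonneg hs.1 (hf _))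
  · exact hf _
  · exact hf _

lemma gfun_bound (X : Set K) [CompactSpace X] (hXcl : IsClosed X) (hne : X.Nonempty) (f : C(X, ℝ)) (k : K) :
    |gfun X hXcl hne f k| ≤ ‖f‖ := by
  have hb : ∀ y : X, |f y - 0| ≤ ‖f‖ := fun y => by
    rw [sub_zero, ← Real.norm_eq_abs]; exact f.norm_coe_le_norm y
  simp only [gfun]
  split_ifs with h1 h2
  · have hs := ury_mem (aa X hXcl hne k) (bb X hXcl hne k) k
    simpa using convex_abs_le hs.1 hs.2 (hb _) (hb _)
  · simpa using hb _
  · simpa using hb _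

lemma gfun_cont (X : Set K) (hXcl : IsClosed X) (hne : X.Nonempty) (f : C(X, ℝ)) :
    Continuous (gfun X hXcl hne f) := by
  rw [continuous_iff_continuousAt]
  intro k
  by_cases hk : k ∈ X
  · -- k ∈ X
    rw [continuousAt_iff_continuous_left_right]
    constructor
    · -- left continuity
      by_cases hlt : (X ∩ Iio k).Nonempty
      · by_cases hgex : ∃ p, IsGreatest (X ∩ Iio k) p
        · obtain ⟨p, hp⟩ := hgex
          have hpX : p ∈ X := hp.1.1
          have hpk : p < k := hp.1.2
          have hgap : ∀ x ∈ X, x ≤ p ∨ k ≤ x := fun x hx => by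
            rcases lt_or_ge x k with h | h
            · exact Or.inl (hp.2 ⟨hx, h⟩)
            · exact Or.inr h
          have hcont : Continuous fun k' : K =>
              (1 - ury p k k') * f ⟨p, hpX⟩ + ury p k k' * f ⟨k, hk⟩ :=
            ((continuous_const.sub (ury p k).continuous).mul continuous_const).add
              ((ury p k).continuous.mul continuous_const)
          refine hcont.continuousWithinAt.congr_of_eventuallyEq ?_ ?_
          · filter_upwards [mem_nhdsWithin_of_mem_nhds (isOpen_Ioi.mem_nhds hpk),
              self_mem_nhdsWithin] with k' h1 h2
            exact gfun_eq_two X hXcl hne f hpX hk hpk hgap (le_of_lt h1) h2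
          · exact gfun_eq_two X hXcl hne f hpX hk hpk hgap hpk.le le_rfl
        · -- k is a limit of X from the left
          have hlim : ∀ c, c < k → (X ∩ Ioo c k).Nonempty := by
            intro c hc
            by_contra h
            apply hgex
            have heq : X ∩ Iio k = X ∩ Iic c := by
              ext x
              constructor
              · rintro ⟨hx1, hx2⟩
                refine ⟨hx1, ?_⟩
                by_contra h'
                simp only [mem_Iic, not_le] at h'
                exact h ⟨x, hx1, h', hx2⟩
              · rintro ⟨hx1, hx2⟩
                exact ⟨hx1, lt_of_le_of_lt hx2 hc⟩
            obtain ⟨p, hp⟩ := (hXcl.isCompact.inter_right isClosed_Iic).exists_isGreatest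
              (heq ▸ hlt)
            exact ⟨p, by rw [heq]; exact hp⟩
          have hkk : gfun X hXcl hne f k = f ⟨k, hk⟩ := gfun_mem_X X hXcl hne f hk
          show Tendsto _ _ _
          rw [hkk, Metric.tendsto_nhds]
          intro ε hε
          have hfc : ∀ᶠ y in 𝓝 (⟨k, hk⟩ : X), dist (f y) (f ⟨k, hk⟩) < ε / 2 :=
            Metric.tendsto_nhds.mp (f.continuous.tendsto ⟨k, hk⟩) (ε / 2) (by linarith)
          obtain ⟨U, hU, hUsub⟩ := (mem_nhds_subtype X ⟨k, hk⟩ _).mp hfc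
          obtain ⟨x₁, hx₁⟩ := hlt
          obtain ⟨c, hck, hcU⟩ := exists_Ioc_subset_of_mem_nhds hU ⟨x₁, hx₁.2⟩
          obtain ⟨x₂, hx₂X, hx₂c, hx₂k⟩ := hlim c hck
          filter_upwards [mem_nhdsWithin_of_mem_nhds (isOpen_Ioi.mem_nhds hx₂k),
            self_mem_nhdsWithin] with k' h1 h2
          have hA' : (X ∩ Iic k').Nonempty := ⟨x₂, hx₂X, le_of_lt h1⟩
          have hB' : (X ∩ Ici k').Nonempty := ⟨k, hk, h2⟩
          have hp1 : x₂ ≤ aa X hXcl hne k' := (aa_spec X hXcl hne hA').2 ⟨hx₂X, le_of_lt h1⟩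
          have hp2 : aa X hXcl hne k' ≤ k := (aa_spec X hXcl hne hA').1.2.trans h2
          have hq1 : k' ≤ bb X hXcl hne k' := (bb_spec X hXcl hne hB').1.2
          have hq2 : bb X hXcl hne k' ≤ k := (bb_spec X hXcl hne hB').2 ⟨hk, h2⟩
          have hfp : dist (f ⟨aa X hXcl hne k', (aa_spec X hXcl hne hA').1.1⟩) (f ⟨k, hk⟩)
              < ε / 2 := hUsub (hcU ⟨lt_of_lt_of_le hx₂c hp1, hp2⟩)
          have hfq : dist (f ⟨bb X hXcl hne k', (bb_spec X hXcl hne hB').1.1⟩) (f ⟨k, hk⟩)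
              < ε / 2 := hUsub (hcU ⟨hx₂c.trans (lt_of_lt_of_le h1 hq1), hq2⟩)
          rw [gfun_eq_formula X hXcl hne f hA' hB', Real.dist_eq]
          have hs := ury_mem (aa X hXcl hne k') (bb X hXcl hne k') k'
          rw [Real.dist_eq] at hfp hfq
          have hcc := convex_abs_le hs.1 hs.2 hfp.le hfq.le
          linarith
      · -- no points of X below k
        have hconst : ∀ k' ∈ Iic k, gfun X hXcl hne f k' = f ⟨k, hk⟩ := by
          intro k' hk'
          rcases eq_or_lt_of_le (hk' : k' ≤ k) with heq | hlt'
          · rw [heq]; exact gfun_mem_X X hXcl hne f hk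
          · have hA' : ¬(X ∩ Iic k').Nonempty := by
              rintro ⟨x, hx1, hx2⟩
              exact hlt ⟨x, hx1, lt_of_le_of_lt hx2 hlt'⟩
            have hbk : bb X hXcl hne k' = k :=
              (bb_spec X hXcl hne (B_ne X hne hA')).unique ⟨⟨hk, hlt'.le⟩, fun x hx =>
                le_of_not_gt fun h' => hlt ⟨x, hx.1, h'⟩⟩
            rw [gfun, dif_neg hA',
              fval_congr f (bb_spec X hXcl hne (B_ne X hne hA')).1.1 hk hbk]
        exact continuousWithinAt_const.congr hconst (hconst k le_rfl)
    · -- right continuity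
      by_cases hlt : (X ∩ Ioi k).Nonempty
      · by_cases hgex : ∃ q, IsLeast (X ∩ Ioi k) q
        · obtain ⟨q, hq⟩ := hgex
          have hqX : q ∈ X := hq.1.1
          have hkq : k < q := hq.1.2
          have hgap : ∀ x ∈ X, x ≤ k ∨ q ≤ x := fun x hx => by
            rcases le_or_gt x k with h | h
            · exact Or.inl h
            · exact Or.inr (hq.2 ⟨hx, h⟩)
          have hcont : Continuous fun k' : K =>
              (1 - ury k q k') * f ⟨k, hk⟩ + ury k q k' * f ⟨q, hqX⟩ :=
            ((continuous_const.sub (ury k q).continuous).mul continuous_const).add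
              ((ury k q).continuous.mul continuous_const)
          refine hcont.continuousWithinAt.congr_of_eventuallyEq ?_ ?_
          · filter_upwards [mem_nhdsWithin_of_mem_nhds (isOpen_Iio.mem_nhds hkq),
              self_mem_nhdsWithin] with k' h1 h2
            exact gfun_eq_two X hXcl hne f hk hqX hkq hgap h2 (le_of_lt h1)
          · exact gfun_eq_two X hXcl hne f hk hqX hkq hgap le_rfl hkq.le
        · -- k is a limit of X from the right
          have hlim : ∀ c, k < c → (X ∩ Ioo k c).Nonempty := by
            intro c hc
            by_contra h
            apply hgex
            have heq : X ∩ Ioi k = X ∩ Ici c := by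
              ext x
              constructor
              · rintro ⟨hx1, hx2⟩
                refine ⟨hx1, ?_⟩
                by_contra h'
                simp only [mem_Ici, not_le] at h'
                exact h ⟨x, hx1, hx2, h'⟩
              · rintro ⟨hx1, hx2⟩
                exact ⟨hx1, lt_of_lt_of_le hc hx2⟩
            obtain ⟨q, hq⟩ := (hXcl.isCompact.inter_right isClosed_Ici).exists_isLeast
              (heq ▸ hlt)
            exact ⟨q, by rw [heq]; exact hq⟩
          have hkk : gfun X hXcl hne f k = f ⟨k, hk⟩ := gfun_mem_X X hXcl hne f hk
          show Tendsto _ _ _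
          rw [hkk, Metric.tendsto_nhds]
          intro ε hε
          have hfc : ∀ᶠ y in 𝓝 (⟨k, hk⟩ : X), dist (f y) (f ⟨k, hk⟩) < ε / 2 :=
            Metric.tendsto_nhds.mp (f.continuous.tendsto ⟨k, hk⟩) (ε / 2) (by linarith)
          obtain ⟨U, hU, hUsub⟩ := (mem_nhds_subtype X ⟨k, hk⟩ _).mp hfc
          obtain ⟨x₁, hx₁⟩ := hlt
          obtain ⟨c, hkc, hcU⟩ := exists_Ico_subset_of_mem_nhds hU ⟨x₁, hx₁.2⟩
          obtain ⟨x₂, hx₂X, hx₂k, hx₂c⟩ := hlim c hkc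
          filter_upwards [mem_nhdsWithin_of_mem_nhds (isOpen_Iio.mem_nhds hx₂k),
            self_mem_nhdsWithin] with k' h1 h2
          have hA' : (X ∩ Iic k').Nonempty := ⟨k, hk, h2⟩
          have hB' : (X ∩ Ici k').Nonempty := ⟨x₂, hx₂X, le_of_lt h1⟩
          have hp1 : k ≤ aa X hXcl hne k' := (aa_spec X hXcl hne hA').2 ⟨hk, h2⟩
          have hp2 : aa X hXcl hne k' < c :=
            lt_of_le_of_lt ((aa_spec X hXcl hne hA').1.2.trans (le_of_lt h1)) hx₂c
          have hq1 : bb X hXcl hne k' ≤ x₂ := (bb_spec X hXcl hne hB').2 ⟨hx₂X, le_of_lt h1⟩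
          have hq2 : k ≤ bb X hXcl hne k' := h2.trans (bb_spec X hXcl hne hB').1.2
          have hfp : dist (f ⟨aa X hXcl hne k', (aa_spec X hXcl hne hA').1.1⟩) (f ⟨k, hk⟩)
              < ε / 2 := hUsub (hcU ⟨hp1, hp2⟩)
          have hfq : dist (f ⟨bb X hXcl hne k', (bb_spec X hXcl hne hB').1.1⟩) (f ⟨k, hk⟩)
              < ε / 2 := hUsub (hcU ⟨hq2, lt_of_le_of_lt hq1 hx₂c⟩)
          rw [gfun_eq_formula X hXcl hne f hA' hB', Real.dist_eq]
          have hs := ury_mem (aa X hXcl hne k') (bb X hXcl hne k') k'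
          rw [Real.dist_eq] at hfp hfq
          have hcc := convex_abs_le hs.1 hs.2 hfp.le hfq.le
          linarith
      · -- no points of X above k
        have hconst : ∀ k' ∈ Ici k, gfun X hXcl hne f k' = f ⟨k, hk⟩ := by
          intro k' hk'
          rcases eq_or_lt_of_le (hk' : k ≤ k') with heq | hlt'
          · rw [← heq]; exact gfun_mem_X X hXcl hne f hk
          · have hub : ∀ x ∈ X, x ≤ k := fun x hx =>
              le_of_not_gt fun h' => hlt ⟨x, hx, h'⟩
            have hA' : (X ∩ Iic k').Nonempty := ⟨k, hk, hlt'.le⟩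
            have hB' : ¬(X ∩ Ici k').Nonempty := by
              rintro ⟨x, hx1, hx2⟩
              exact absurd (hub x hx1) (not_le.mpr (lt_of_lt_of_le hlt' hx2))
            have hak : aa X hXcl hne k' = k :=
              (aa_spec X hXcl hne hA').unique ⟨⟨hk, hlt'.le⟩, fun x hx =>
                hub x hx.1⟩
            rw [gfun, dif_pos hA', dif_neg hB',
              fval_congr f (aa_spec X hXcl hne hA').1.1 hk hak]
        exact continuousWithinAt_const.congr hconst (hconst k le_rfl)
  · -- k ∉ X
    by_cases hA : (X ∩ Iic k).Nonempty
    · by_cases hB : (X ∩ Ici k).Nonempty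
      · -- k lies in a gap of X
        have hpX : aa X hXcl hne k ∈ X := (aa_spec X hXcl hne hA).1.1
        have hqX : bb X hXcl hne k ∈ X := (bb_spec X hXcl hne hB).1.1
        have hpk : aa X hXcl hne k < k :=
          lt_of_le_of_ne (aa_spec X hXcl hne hA).1.2 fun h => hk (by rw [← h]; exact hpX)
        have hkq : k < bb X hXcl hne k :=
          lt_of_le_of_ne (bb_spec X hXcl hne hB).1.2 fun h => hk (by rw [h]; exact hqX)
        have hpq : aa X hXcl hne k < bb X hXcl hne k := hpk.trans hkq
        have hgap : ∀ x ∈ X, x ≤ aa X hXcl hne k ∨ bb X hXcl hne k ≤ x := fun x hx => by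
          rcases le_total x k with h | h
          · exact Or.inl ((aa_spec X hXcl hne hA).2 ⟨hx, h⟩)
          · exact Or.inr ((bb_spec X hXcl hne hB).2 ⟨hx, h⟩)
        have hcont : Continuous fun k' : K =>
            (1 - ury (aa X hXcl hne k) (bb X hXcl hne k) k') * f ⟨aa X hXcl hne k, hpX⟩
              + ury (aa X hXcl hne k) (bb X hXcl hne k) k' * f ⟨bb X hXcl hne k, hqX⟩ :=
          ((continuous_const.sub (ury _ _).continuous).mul continuous_const).add
            ((ury _ _).continuous.mul continuous_const)
        refine hcont.continuousAt.congr ?_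
        filter_upwards [isOpen_Ioo.mem_nhds ⟨hpk, hkq⟩] with k' hk'
        exact (gfun_eq_two X hXcl hne f hpX hqX hpq hgap (le_of_lt hk'.1) (le_of_lt hk'.2)).symm
      · -- k is above all of X
        have hpX : aa X hXcl hne k ∈ X := (aa_spec X hXcl hne hA).1.1
        have hak : aa X hXcl hne k < k :=
          lt_of_le_of_ne (aa_spec X hXcl hne hA).1.2 fun h => hk (by rw [← h]; exact hpX)
        have hub : ∀ x ∈ X, x ≤ aa X hXcl hne k := fun x hx =>
          (aa_spec X hXcl hne hA).2 ⟨hx, le_of_not_ge fun h' => hB ⟨x, hx, h'⟩⟩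
        have hconst : ∀ k' ∈ Ioi (aa X hXcl hne k),
            gfun X hXcl hne f k' = f ⟨aa X hXcl hne k, hpX⟩ := by
          intro k' hk'
          have hA' : (X ∩ Iic k').Nonempty := ⟨aa X hXcl hne k, hpX, le_of_lt hk'⟩
          have hB' : ¬(X ∩ Ici k').Nonempty := by
            rintro ⟨x, hx1, hx2⟩
            exact absurd (hub x hx1) (not_le.mpr (lt_of_lt_of_le hk' hx2))
          have haa' : aa X hXcl hne k' = aa X hXcl hne k :=
            (aa_spec X hXcl hne hA').unique ⟨⟨hpX, le_of_lt hk'⟩, fun x hx => hub x hx.1⟩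
          rw [gfun, dif_pos hA', dif_neg hB',
            fval_congr f (aa_spec X hXcl hne hA').1.1 hpX haa']
        refine ContinuousAt.congr (f := fun _ : K => f ⟨aa X hXcl hne k, hpX⟩)
          continuousAt_const ?_
        filter_upwards [isOpen_Ioi.mem_nhds hak] with k' hk'
        exact (hconst k' hk').symm
    · -- k is below all of X
      have hB : (X ∩ Ici k).Nonempty := B_ne X hne hA
      have hqX : bb X hXcl hne k ∈ X := (bb_spec X hXcl hne hB).1.1
      have hkb : k < bb X hXcl hne k :=
        lt_of_le_of_ne (bb_spec X hXcl hne hB).1.2 fun h => hk (by rw [h]; exact hqX)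
      have hlow : ∀ x ∈ X, bb X hXcl hne k ≤ x := fun x hx =>
        (bb_spec X hXcl hne hB).2 ⟨hx, le_of_not_ge fun h' => hA ⟨x, hx, h'⟩⟩
      have hconst : ∀ k' ∈ Iio (bb X hXcl hne k),
          gfun X hXcl hne f k' = f ⟨bb X hXcl hne k, hqX⟩ := by
        intro k' hk'
        have hA' : ¬(X ∩ Iic k').Nonempty := by
          rintro ⟨x, hx1, hx2⟩
          exact absurd (hlow x hx1) (not_le.mpr (lt_of_le_of_lt hx2 hk'))
        have hbb' : bb X hXcl hne k' = bb X hXcl hne k :=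
          (bb_spec X hXcl hne (B_ne X hne hA')).unique
            ⟨⟨hqX, le_of_lt hk'⟩, fun x hx => hlow x hx.1⟩
        rw [gfun, dif_neg hA',
          fval_congr f (bb_spec X hXcl hne (B_ne X hne hA')).1.1 hqX hbb']
      refine ContinuousAt.congr (f := fun _ : K => f ⟨bb X hXcl hne k, hqX⟩)
        continuousAt_const ?_
      filter_upwards [isOpen_Iio.mem_nhds hkb] with k' hk'
      exact (hconst k' hk').symm

noncomputable def Tlin (X : Set K) (hXcl : IsClosed X) (hne : X.Nonempty) :
    C(X, ℝ) →ₗ[ℝ] C(K, ℝ) where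
  toFun f := ⟨gfun X hXcl hne f, gfun_cont X hXcl hne f⟩
  map_add' f g := ContinuousMap.ext fun k => gfun_add X hXcl hne f g k
  map_smul' c f := ContinuousMap.ext fun k => gfun_smul X hXcl hne c f k

end RegExtAux

/-- For a closed subset X of a compact linearly ordered space K there exists a regular
extension operator T : C(X) → C(K): positive, linear, T1 = 1, Tf extends f, ‖T‖ = 1. -/
theorem exists_regular_extension_operator
    {K : Type*} [TopologicalSpace K] [LinearOrder K] [OrderTopology K] [CompactSpace K]
    (X : Set K) (hXne : X.Nonempty) (hXcl : IsClosed X) [CompactSpace X] :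
    ∃ T : C(X, ℝ) →L[ℝ] C(K, ℝ), ‖T‖ = 1 ∧ T 1 = 1 ∧
      (∀ f : C(X, ℝ), 0 ≤ f → 0 ≤ T f) ∧
      (∀ (f : C(X, ℝ)) (x : K) (hx : x ∈ X), (T f) x = f ⟨x, hx⟩) := by
  obtain ⟨x₀, hx₀⟩ := hXne
  haveI : Nonempty K := ⟨x₀⟩
  haveI : Nonempty X := ⟨⟨x₀, hx₀⟩⟩
  have hne : X.Nonempty := ⟨x₀, hx₀⟩
  have hb : ∀ f : C(X, ℝ), ‖RegExtAux.Tlin X hXcl hne f‖ ≤ 1 * ‖f‖ := by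
    intro f
    rw [one_mul, ContinuousMap.norm_le _ (norm_nonneg f)]
    intro k
    show ‖RegExtAux.gfun X hXcl hne f k‖ ≤ ‖f‖
    rw [Real.norm_eq_abs]
    exact RegExtAux.gfun_bound X hXcl hne f k
  set T := (RegExtAux.Tlin X hXcl hne).mkContinuous 1 hb with hTdef
  have hT1 : T 1 = 1 := ContinuousMap.ext fun k => RegExtAux.gfun_one X hXcl hne k
  refine ⟨T, ?_, hT1, ?_, ?_⟩
  · refine le_antisymm ((RegExtAux.Tlin X hXcl hne).mkContinuous_norm_le zero_le_one hb) ?_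
    calc (1:ℝ) = ‖T 1‖ := by rw [hT1, norm_one]
      _ ≤ ‖T‖ * ‖(1 : C(X, ℝ))‖ := T.le_opNorm 1
      _ = ‖T‖ := by rw [norm_one, mul_one]
  · intro f hf
    rw [ContinuousMap.le_def]
    intro k
    have hf' : ∀ y, 0 ≤ f y := fun y => by
      have := (ContinuousMap.le_def.mp hf) y
      simpa using this
    exact RegExtAux.gfun_nonneg X hXcl hne hf' k
  · intro f x hx
    exact RegExtAux.gfun_mem_X X hXcl hne f hx
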